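/- Let A : ℝ → ℝ be continuously differentiable with A(x) ≤ −a₀ for some a₀ > 0 and all x ∈ ℝ, and with ∫_ℝ (1 + |t|)·|A′(t)| dt < ∞. If r₁, r₂ : ℝ → ℝ are two bounded differentiable functions with rᵢ(x) > 0 and rᵢ′(x) = A(x)/rᵢ(x) + 1 for all x ∈ ℝ (i = 1, 2), then r₁ = r₂. -/

import Mathlib

open MeasureTheory Filter

lemma horizon_le (A : ℝ → ℝ) (hA : Continuous A)
    (a₀ : ℝ) (ha₀ : 0 < a₀) (hAneg : ∀ x, A x ≤ -a₀)
    (r₁ r₂ : ℝ → ℝ)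
    (h₁pos : ∀ x, 0 < r₁ x) (h₂pos : ∀ x, 0 < r₂ x)
    (h₁bdd : ∃ M, ∀ x, r₁ x ≤ M)
    (h₁ode : ∀ x, HasDerivAt r₁ (A x / r₁ x + 1) x)
    (h₂ode : ∀ x, HasDerivAt r₂ (A x / r₂ x + 1) x)
    (x₀ : ℝ) : r₁ x₀ ≤ r₂ x₀ := by
  by_contra h
  push_neg at h
  obtain ⟨M₁, hM₁⟩ := h₁bdd
  have hM₁pos : 0 < M₁ := lt_of_lt_of_le (h₁pos 0) (hM₁ 0)
  set d : ℝ → ℝ := fun x => r₁ x - r₂ x with hd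
  set c : ℝ → ℝ := fun x => -A x / (r₁ x * r₂ x) with hc
  have hd₀pos : 0 < d x₀ := sub_pos.mpr h
  set ε : ℝ := a₀ / (M₁ * M₁) with hε
  have hεpos : 0 < ε := div_pos ha₀ (mul_pos hM₁pos hM₁pos)
  -- continuity
  have hr₁c : Continuous r₁ :=
    continuous_iff_continuousAt.mpr fun x => (h₁ode x).differentiableAt.continuousAt
  have hr₂c : Continuous r₂ :=
    continuous_iff_continuousAt.mpr fun x => (h₂ode x).differentiableAt.continuousAt
  have hprodne : ∀ x, r₁ x * r₂ x ≠ 0 :=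
    fun x => (mul_pos (h₁pos x) (h₂pos x)).ne'
  have hcc : Continuous c := (hA.neg).div (hr₁c.mul hr₂c) hprodne
  have hcpos : ∀ x, 0 < c x := by
    intro x
    apply div_pos _ (mul_pos (h₁pos x) (h₂pos x))
    linarith [hAneg x]
  -- derivative of d
  have hdder : ∀ x, HasDerivAt d (c x * d x) x := by
    intro x
    have := (h₁ode x).sub (h₂ode x)
    refine this.congr_deriv ?_
    have h1 : r₁ x ≠ 0 := (h₁pos x).ne'
    have h2 : r₂ x ≠ 0 := (h₂pos x).ne'
    simp only [hc, hd]
    field_simp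
    ring
  -- the integrating factor
  set F : ℝ → ℝ := fun x => ∫ t in x₀..x, c t with hF
  have hFder : ∀ x, HasDerivAt F (c x) x := by
    intro x
    exact intervalIntegral.integral_hasDerivAt_right
      (hcc.intervalIntegrable x₀ x)
      (hcc.stronglyMeasurableAtFilter volume (nhds x))
      hcc.continuousAt
  set φ : ℝ → ℝ := fun x => d x * Real.exp (-F x) with hφ
  have hφder : ∀ x, HasDerivAt φ 0 x := by
    intro x
    have hE : HasDerivAt (fun y => Real.exp (-F y)) (-c x * Real.exp (-F x)) x := by
      have := (((hFder x).neg).exp)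
      refine this.congr_deriv ?_
      simp only [Pi.neg_apply]
      ring
    have := (hdder x).mul hE
    refine this.congr_deriv ?_
    ring
  have hφconst : ∀ x, φ x = φ x₀ := by
    intro x
    exact is_const_of_deriv_eq_zero
      (fun y => (hφder y).differentiableAt)
      (fun y => (hφder y).deriv) x x₀
  have hdval : ∀ x, d x = d x₀ * Real.exp (F x) := by
    intro x
    have h2 : F x₀ = 0 := by simp [hF]
    have h1 : d x * Real.exp (-F x) = d x₀ := by
      have h0 : φ x = φ x₀ := hφconst x
      simp only [hφ, h2, neg_zero, Real.exp_zero, mul_one] at h0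
      exact h0
    calc d x = d x * Real.exp (-F x) * Real.exp (F x) := by
          rw [mul_assoc, ← Real.exp_add]
          simp
      _ = d x₀ * Real.exp (F x) := by rw [h1]
  -- lower bound on c via bounds on r₁, r₂
  have hr₂le : ∀ x, r₂ x ≤ M₁ := by
    intro x
    by_contra hcon
    push_neg at hcon
    have : d x ≤ 0 := by
      have := hM₁ x
      simp only [hd]
      linarith
    have := hdval x
    nlinarith [Real.exp_pos (F x)]
  have hεle : ∀ x, ε ≤ c x := by
    intro x
    have h1 : 0 < r₁ x * r₂ x := mul_pos (h₁pos x) (h₂pos x)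
    have h2 : r₁ x * r₂ x ≤ M₁ * M₁ :=
      mul_le_mul (hM₁ x) (hr₂le x) (h₂pos x).le hM₁pos.le
    have h3 : a₀ ≤ -A x := by linarith [hAneg x]
    have h0 : (0:ℝ) ≤ -A x := by linarith [hAneg x]
    exact div_le_div₀ h0 h3 h1 h2
  -- F grows at least linearly
  have hFgrow : ∀ x, x₀ ≤ x → ε * (x - x₀) ≤ F x := by
    intro x hx
    have h1 : (∫ _t in x₀..x, ε) ≤ ∫ t in x₀..x, c t := by
      apply intervalIntegral.integral_mono_on hx
        (intervalIntegrable_const) (hcc.intervalIntegrable x₀ x)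
      intro t _
      exact hεle t
    calc ε * (x - x₀) = ∫ _t in x₀..x, ε := by
          rw [intervalIntegral.integral_const, smul_eq_mul, mul_comm]
      _ ≤ ∫ t in x₀..x, c t := h1
  -- contradiction at a large x
  set x := x₀ + M₁ / (d x₀ * ε) with hx
  have hq : 0 < M₁ / (d x₀ * ε) := div_pos hM₁pos (mul_pos hd₀pos hεpos)
  have hxge : x₀ ≤ x := by rw [hx]; linarith
  have h1 : ε * (x - x₀) = M₁ / d x₀ := by
    rw [hx]
    field_simp
    ring
  have h2 : d x ≥ d x₀ * Real.exp (ε * (x - x₀)) := by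
    rw [hdval x]
    have := Real.exp_le_exp.mpr (hFgrow x hxge)
    nlinarith
  have h3 : Real.exp (ε * (x - x₀)) ≥ ε * (x - x₀) + 1 := Real.add_one_le_exp _
  have h4 : d x ≥ d x₀ * (M₁ / d x₀ + 1) := by
    rw [← h1]
    nlinarith
  have h5 : d x₀ * (M₁ / d x₀ + 1) = M₁ + d x₀ := by
    field_simp
  have h6 : d x < M₁ := by
    have := hM₁ x
    have := h₂pos x
    simp only [hd]
    linarith
  have h7 : M₁ + d x₀ ≤ d x := by rw [← h5]; exact h4
  linarith

/-- Uniqueness part of Theorem 4.1: under the hypotheses `A ≤ -a₀ < 0`, `A` C¹ and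
`∫ (1+|t|)|A'(t)| dt < ∞`, the ODE `r' = A(x)/r + 1` has at most one positive
bounded solution defined on all of `ℝ` (the outer black hole horizon). -/
theorem acoustic_black_hole_horizon_unique (A : ℝ → ℝ) (hA : ContDiff ℝ 1 A)
    (a₀ : ℝ) (ha₀ : 0 < a₀) (hAneg : ∀ x, A x ≤ -a₀)
    (hint : Integrable (fun t => (1 + |t|) * |deriv A t|))
    (r₁ r₂ : ℝ → ℝ)
    (h₁pos : ∀ x, 0 < r₁ x) (h₂pos : ∀ x, 0 < r₂ x)
    (h₁bdd : ∃ M, ∀ x, r₁ x ≤ M) (h₂bdd : ∃ M, ∀ x, r₂ x ≤ M)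
    (h₁ode : ∀ x, HasDerivAt r₁ (A x / r₁ x + 1) x)
    (h₂ode : ∀ x, HasDerivAt r₂ (A x / r₂ x + 1) x) :
    r₁ = r₂ := by
  have hAc : Continuous A := hA.continuous
  funext x
  exact le_antisymm
    (horizon_le A hAc a₀ ha₀ hAneg r₁ r₂ h₁pos h₂pos h₁bdd h₁ode h₂ode x)
    (horizon_le A hAc a₀ ha₀ hAneg r₂ r₁ h₂pos h₁pos h₂bdd h₂ode h₁ode x)
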